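/- For every prime p ≥ 5, there exists a prime q < p with q ≡ 3 (mod 4) such that q is a quadratic non-residue modulo p. -/

import Mathlib

/-- Every natural number `≡ 3 (mod 4)` has a prime factor `≡ 3 (mod 4)`. -/
lemma exists_prime_three_mod_four_dvd :
    ∀ n : ℕ, n % 4 = 3 → ∃ q : ℕ, q.Prime ∧ q % 4 = 3 ∧ q ∣ n := by
  intro n
  induction n using Nat.strong_induction_on with
  | _ n ih =>
    intro hn
    have hn1 : n ≠ 1 := by omega
    have hmf : n.minFac.Prime := Nat.minFac_prime hn1
    have hdvd : n.minFac ∣ n := Nat.minFac_dvd n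
    have hmf2 : n.minFac ≠ 2 := by
      intro h
      have h2 : (2 : ℕ) ∣ n := h ▸ hdvd
      omega
    have hmfodd : n.minFac % 2 = 1 := hmf.eq_two_or_odd.resolve_left hmf2
    rcases (by omega : n.minFac % 4 = 1 ∨ n.minFac % 4 = 3) with h1 | h3
    · -- minFac ≡ 1, recurse on n / minFac
      have hmpos : 0 < n := by omega
      obtain ⟨m, hm⟩ := hdvd
      have hmm4 : m % 4 = 3 := by
        have hmod := Nat.mul_mod n.minFac m 4
        rw [← hm, h1, hn] at hmod
        have : m % 4 < 4 := Nat.mod_lt _ (by norm_num)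
        omega
      have hmlt : m < n := by
        have h2le : 2 ≤ n.minFac := hmf.two_le
        rcases Nat.lt_or_ge m n with h | h
        · exact h
        · exfalso; nlinarith [hm]
      obtain ⟨q, hq, hq4, hqdvd⟩ := ih m hmlt hmm4
      exact ⟨q, hq, hq4, hqdvd.trans (by rw [hm]; exact dvd_mul_left m n.minFac)⟩
    · exact ⟨n.minFac, hmf, h3, hdvd⟩

/-- Bridge from `¬ IsSquare` in `ZMod p` to the integer congruence formulation. -/
lemma not_sq_goal (p q : ℕ) (h : ¬ IsSquare ((q : ℕ) : ZMod p)) :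
    ¬ ∃ x : ℤ, x ^ 2 ≡ (q : ℤ) [ZMOD p] := by
  rintro ⟨x, hx⟩
  apply h
  have h2 : ((x ^ 2 : ℤ) : ZMod p) = (((q : ℕ) : ℤ) : ZMod p) :=
    (ZMod.intCast_eq_intCast_iff _ _ _).mpr hx
  push_cast at h2
  exact ⟨(x : ZMod p), by rw [← h2]; ring⟩

/-- For every prime `p ≥ 5`, there exists a prime `q < p` with `q ≡ 3 (mod 4)`
which is a quadratic non-residue modulo `p`. -/
theorem stmt_1 (p : ℕ) (hp : p.Prime) (hp5 : 5 ≤ p) :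
    ∃ q : ℕ, q.Prime ∧ q < p ∧ q % 4 = 3 ∧ ¬ ∃ x : ℤ, x ^ 2 ≡ (q : ℤ) [ZMOD p] := by
  haveI hpf : Fact p.Prime := ⟨hp⟩
  have hp2 : p ≠ 2 := by omega
  have hpodd : p % 2 = 1 := hp.eq_two_or_odd.resolve_left hp2
  rcases (by omega : p % 4 = 1 ∨ p % 4 = 3) with hp41 | hp43
  · -- Case p ≡ 1 (mod 4): Dirichlet seed + descent
    classical
    have hex : ∃ q : ℕ, q.Prime ∧ q % 4 = 3 ∧ ¬ IsSquare ((p : ℕ) : ZMod q) := by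
      have hcop : Nat.Coprime 4 p := by
        refine Nat.coprime_comm.mp (hp.coprime_iff_not_dvd.mpr ?_)
        intro h
        have := Nat.le_of_dvd (by norm_num) h
        omega
      obtain ⟨n₀, hn₀⟩ := FiniteField.exists_nonsquare (F := ZMod p)
        (by rw [ZMod.ringChar_zmod_n]; exact hp2)
      have hn₀0 : n₀ ≠ 0 := fun h => hn₀ (h ▸ ⟨0, by simp⟩)
      haveI : NeZero (4 * p) := ⟨by positivity⟩
      set e := ZMod.chineseRemainder hcop with he
      set a : ZMod (4 * p) := e.symm (3, n₀) with ha
      have hau : IsUnit a := by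
        refine IsUnit.of_mul_eq_one (a := a) (e.symm (3, n₀⁻¹)) ?_
        rw [ha, ← map_mul]
        have h1 : ((3, n₀) * (3, n₀⁻¹) : ZMod 4 × ZMod p) = 1 := by
          have : ((3 : ZMod 4), n₀) * (3, n₀⁻¹) = (3 * 3, n₀ * n₀⁻¹) := rfl
          rw [this, mul_inv_cancel₀ hn₀0]
          norm_num
          rfl
        rw [h1, map_one]
      obtain ⟨Q, hQgt, hQpr, hQc⟩ := Nat.forall_exists_prime_gt_and_eq_mod hau 4
      haveI : Fact Q.Prime := ⟨hQpr⟩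
      have h1 : e ((Q : ℕ) : ZMod (4 * p)) = (3, n₀) := by
        rw [hQc, RingEquiv.apply_symm_apply]
      have h2 : e ((Q : ℕ) : ZMod (4 * p)) = ((Q : ℕ) : ZMod 4 × ZMod p) := map_natCast _ _
      have hfst : ((Q : ℕ) : ZMod 4) = 3 := by
        have := congrArg Prod.fst (h2.symm.trans h1)
        simpa using this
      have hsnd : ((Q : ℕ) : ZMod p) = n₀ := by
        have := congrArg Prod.snd (h2.symm.trans h1)
        simpa using this
      have hQm4 : Q % 4 = 3 := by
        have h3 : ((Q : ℕ) : ZMod 4) = ((3 : ℕ) : ZMod 4) := by rw [hfst]; norm_num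
        have := (ZMod.natCast_eq_natCast_iff' _ _ _).mp h3
        omega
      have hQ2 : Q ≠ 2 := by omega
      refine ⟨Q, hQpr, hQm4, ?_⟩
      intro hps
      have hQns : ¬ IsSquare ((Q : ℕ) : ZMod p) := by rw [hsnd]; exact hn₀
      exact hQns ((ZMod.exists_sq_eq_prime_iff_of_mod_four_eq_one hp41 hQ2).mpr hps)
    set q := Nat.find hex with hqdef
    obtain ⟨hqpr, hq4, hqns⟩ : q.Prime ∧ q % 4 = 3 ∧ ¬ IsSquare ((p : ℕ) : ZMod q) :=
      Nat.find_spec hex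
    haveI : Fact q.Prime := ⟨hqpr⟩
    have hq2 : q ≠ 2 := by omega
    have hqnep : q ≠ p := by intro h; omega
    have hqltp : q < p := by
      by_contra hge
      have hpltq : p < q := by
        rcases Nat.lt_or_ge p q with h | h
        · exact h
        · exact absurd (by omega : q < p ∨ q = p) (by simpa [hqnep] using hge)
      -- -p is a square mod q
      have hm1 : ¬ IsSquare (-1 : ZMod q) := by
        rw [ZMod.exists_sq_eq_neg_one_iff]
        simp [hq4]
      have hpne : ((p : ℕ) : ZMod q) ≠ 0 := ZMod.prime_ne_zero q p hqnep
      have hchar : ringChar (ZMod q) ≠ 2 := by rw [ZMod.ringChar_zmod_n]; exact hq2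
      have hsq : IsSquare (-((p : ℕ) : ZMod q)) := by
        by_contra hns
        have h1 : quadraticChar (ZMod q) (-((p : ℕ) : ZMod q)) = -1 :=
          quadraticChar_neg_one_iff_not_isSquare.mpr hns
        have h2 : quadraticChar (ZMod q) ((p : ℕ) : ZMod q) = -1 :=
          quadraticChar_neg_one_iff_not_isSquare.mpr hqns
        have h3 : quadraticChar (ZMod q) (-1 : ZMod q) = -1 :=
          quadraticChar_neg_one_iff_not_isSquare.mpr hm1
        have h4 : (-((p : ℕ) : ZMod q)) = (-1) * ((p : ℕ) : ZMod q) := by ring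
        rw [h4, map_mul, h3, h2] at h1
        norm_num at h1
      obtain ⟨r, hr⟩ := hsq
      have hrne : r ≠ 0 := by
        intro h
        rw [h, mul_zero] at hr
        exact (neg_ne_zero.mpr hpne) hr
      have hrval : ((r.val : ℕ) : ZMod q) = r := by rw [ZMod.natCast_val, ZMod.cast_id]
      have hrvlt : r.val < q := ZMod.val_lt r
      have hrv0 : r.val ≠ 0 := fun h => hrne (by rwa [ZMod.val_eq_zero] at h)
      have hqodd : q % 2 = 1 := hqpr.eq_two_or_odd.resolve_left hq2
      set k : ℕ := if r.val % 2 = 0 then r.val else q - r.val with hkdef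
      have hkprop : k ≠ 0 ∧ k < q ∧ k % 2 = 0 := by
        rw [hkdef]
        split_ifs with h
        · exact ⟨hrv0, hrvlt, h⟩
        · refine ⟨by omega, by omega, by omega⟩
      have hkcast : ((k : ℕ) : ZMod q) = r ∨ ((k : ℕ) : ZMod q) = -r := by
        rw [hkdef]
        split_ifs with h
        · exact Or.inl hrval
        · right
          rw [Nat.cast_sub (le_of_lt hrvlt), ZMod.natCast_self, hrval, zero_sub]
      have hkk : ((k : ℕ) : ZMod q) * ((k : ℕ) : ZMod q) = -((p : ℕ) : ZMod q) := by
        rcases hkcast with h | h <;> rw [h]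
        · exact hr.symm
        · rw [neg_mul_neg]; exact hr.symm
      set N : ℕ := k ^ 2 + p with hNdef
      have hqdvdN : q ∣ N := by
        rw [← ZMod.natCast_eq_zero_iff]
        have : ((N : ℕ) : ZMod q) = ((k : ℕ) : ZMod q) * ((k : ℕ) : ZMod q) + ((p : ℕ) : ZMod q) := by
          rw [hNdef]; push_cast; ring
        rw [this, hkk]
        ring
      obtain ⟨m, hm⟩ := hqdvdN
      have hNm4 : N % 4 = 1 := by
        obtain ⟨t, ht⟩ : 2 ∣ k := Nat.dvd_of_mod_eq_zero hkprop.2.2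
        have : N = p + 4 * t ^ 2 := by rw [hNdef, ht]; ring
        rw [this, Nat.add_mul_mod_self_left]
        exact hp41
      have hm4 : m % 4 = 3 := by
        have h1 := Nat.mul_mod q m 4
        rw [← hm, hNm4, hq4] at h1
        have : m % 4 < 4 := Nat.mod_lt _ (by norm_num)
        omega
      obtain ⟨q₁, hq₁pr, hq₁4, hq₁dvd⟩ := exists_prime_three_mod_four_dvd m hm4
      have hq₁lem : q₁ ≤ m := Nat.le_of_dvd (by omega) hq₁dvd
      have hmltq : m < q := by
        have hNlt : N < q * q := by
          have hkq : k < q := hkprop.2.1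
          have h5 : (k : ℤ) < q := by exact_mod_cast hkq
          have h6 : (p : ℤ) < q := by exact_mod_cast hpltq
          have h7 : (0 : ℤ) ≤ k := by positivity
          have : (N : ℤ) < (q : ℤ) * q := by
            rw [hNdef]
            push_cast
            nlinarith [h5, h6, h7]
          exact_mod_cast this
        have := hm ▸ hNlt
        exact Nat.lt_of_mul_lt_mul_left this
      haveI : Fact q₁.Prime := ⟨hq₁pr⟩
      have hq₁nep : q₁ ≠ p := by intro h; omega
      have hq₁ns : ¬ IsSquare ((p : ℕ) : ZMod q₁) := by
        rintro ⟨s, hs⟩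
        have hpne1 : ((p : ℕ) : ZMod q₁) ≠ 0 := ZMod.prime_ne_zero q₁ p hq₁nep
        have hs0 : s ≠ 0 := by
          intro h
          rw [h, mul_zero] at hs
          exact hpne1 hs
        have hdvdN : q₁ ∣ N := hq₁dvd.trans (by rw [hm]; exact dvd_mul_left m q)
        have hN0 : ((N : ℕ) : ZMod q₁) = 0 := (ZMod.natCast_eq_zero_iff _ _).mpr hdvdN
        have hk2 : ((k : ℕ) : ZMod q₁) ^ 2 = -(s * s) := by
          have h8 : ((k : ℕ) : ZMod q₁) ^ 2 + ((p : ℕ) : ZMod q₁) = 0 := by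
            rw [← hN0, hNdef]; push_cast; ring
          rw [← hs]
          linear_combination h8
        have hssne : s * s ≠ 0 := mul_ne_zero hs0 hs0
        have : IsSquare (-1 : ZMod q₁) := by
          refine ⟨((k : ℕ) : ZMod q₁) * s⁻¹, ?_⟩
          have h9 : (((k : ℕ) : ZMod q₁) * s⁻¹) * (((k : ℕ) : ZMod q₁) * s⁻¹)
              = ((k : ℕ) : ZMod q₁) ^ 2 * (s * s)⁻¹ := by
            rw [mul_inv]
            ring
          rw [h9, hk2, neg_mul, mul_inv_cancel₀ hssne]
        rw [ZMod.exists_sq_eq_neg_one_iff] at this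
        exact this hq₁4
      exact Nat.find_min hex (lt_of_le_of_lt hq₁lem hmltq) ⟨hq₁pr, hq₁4, hq₁ns⟩
    refine ⟨q, hqpr, hqltp, hq4, not_sq_goal _ _ ?_⟩
    intro hsq
    exact hqns ((ZMod.exists_sq_eq_prime_iff_of_mod_four_eq_one hp41 hq2).mp hsq)
  · -- Case p ≡ 3 (mod 4): use a prime factor of p - 4
    have hp7 : 7 ≤ p := by omega
    have h34 : (p - 4) % 4 = 3 := by omega
    obtain ⟨q, hq, hq4, hqdvd⟩ := exists_prime_three_mod_four_dvd (p - 4) h34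
    haveI : Fact q.Prime := ⟨hq⟩
    have hq2 : q ≠ 2 := by omega
    have hqle : q ≤ p - 4 := Nat.le_of_dvd (by omega) hqdvd
    have hqlt : q < p := by omega
    have hqp : q ≠ p := by omega
    refine ⟨q, hq, hqlt, hq4, not_sq_goal _ _ ?_⟩
    have hps : IsSquare ((p : ℕ) : ZMod q) := by
      have h4 : ((p - 4 : ℕ) : ZMod q) = 0 := (ZMod.natCast_eq_zero_iff _ _).mpr hqdvd
      have hpe : ((p : ℕ) : ZMod q) = ((p - 4 : ℕ) : ZMod q) + ((4 : ℕ) : ZMod q) := by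
        have h5 : (p - 4) + 4 = p := by omega
        calc ((p : ℕ) : ZMod q) = (((p - 4) + 4 : ℕ) : ZMod q) := by rw [h5]
          _ = ((p - 4 : ℕ) : ZMod q) + ((4 : ℕ) : ZMod q) := by push_cast; ring
      rw [hpe, h4, zero_add]
      exact ⟨2, by push_cast; norm_num⟩
    intro hsq
    exact (ZMod.exists_sq_eq_prime_iff_of_mod_four_eq_three hp43 hq4 hqp.symm).mp hsq hps
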